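/- Let X be a complex Banach space and x, y ∈ X. If P(x) = P(y) for every N-homogeneous polynomial P on X, then y = 0 and x = 0, or x = ζ·y where ζ is a complex N-th root of unity. -/

import Mathlib

open Filter Topology

/-- If `P x = P y` for every `N`-homogeneous polynomial `P` on a complex Banach space `X`,
then either `x = y = 0`, or `x = ζ • y` for some complex `N`-th root of unity `ζ`. -/
theorem eq_up_to_root_of_unity_of_poly_eq {X : Type*} [NormedAddCommGroup X]
    [NormedSpace ℂ X] [CompleteSpace X]
    (N : ℕ) (hN : 0 < N) (x y : X)
    (h : ∀ A : ContinuousMultilinearMap ℂ (fun _ : Fin N => X) ℂ,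
      A (fun _ => x) = A (fun _ => y)) :
    (x = 0 ∧ y = 0) ∨ ∃ ζ : ℂ, ζ ^ N = 1 ∧ x = ζ • y := by
  obtain ⟨M, rfl⟩ : ∃ M, N = M + 1 := ⟨N - 1, (Nat.succ_pred_eq_of_pos hN).symm⟩
  have key : ∀ f : Fin (M + 1) → (X →L[ℂ] ℂ), (∏ i, f i x) = ∏ i, f i y := by
    intro f
    have := h ((ContinuousMultilinearMap.mkPiAlgebra ℂ (Fin (M + 1)) ℂ).compContinuousLinearMap f)
    simpa using this
  have pow : ∀ φ ψ : X →L[ℂ] ℂ, φ x * ψ x ^ M = φ y * ψ y ^ M := by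
    intro φ ψ
    have := key (Fin.cons φ fun _ => ψ)
    simpa [Fin.prod_univ_succ] using this
  have pownn : ∀ ψ : X →L[ℂ] ℂ, ψ x ^ (M + 1) = ψ y ^ (M + 1) := by
    intro ψ
    have := pow ψ ψ
    rw [pow_succ, pow_succ]
    ring_nf
    ring_nf at this
    exact this
  by_cases hy : y = 0
  · left
    refine ⟨?_, hy⟩
    rw [NormedSpace.eq_iff_forall_dual_eq ℂ]
    intro g
    have := pownn g
    simp [hy] at this
    simpa using this
  · right
    obtain ⟨ψ, hψn, hψy⟩ := exists_dual_vector ℂ y (norm_ne_zero_iff.mpr hy)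
    have hd : ψ y ≠ 0 := by
      rw [hψy]
      simpa using hy
    have hc : ψ x ≠ 0 := by
      intro h0
      have h2 := pownn ψ
      rw [h0] at h2
      have h3 : ψ y ^ (M + 1) = 0 := by simpa using h2.symm
      exact hd ((pow_eq_zero_iff (Nat.succ_ne_zero M)).mp h3)
    refine ⟨ψ x / ψ y, ?_, ?_⟩
    · rw [div_pow, pownn ψ, div_self (pow_ne_zero _ hd)]
    · rw [NormedSpace.eq_iff_forall_dual_eq ℂ]
      intro g
      have h1 := pow g ψ
      have h2 := pownn ψ
      have h3 : (g x * ψ y) * ψ y ^ M = (g y * ψ x) * ψ y ^ M := by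
        calc (g x * ψ y) * ψ y ^ M = g x * ψ y ^ (M + 1) := by ring
          _ = g x * ψ x ^ (M + 1) := by rw [h2]
          _ = (g x * ψ x ^ M) * ψ x := by ring
          _ = (g y * ψ y ^ M) * ψ x := by rw [h1]
          _ = (g y * ψ x) * ψ y ^ M := by ring
      have h4 : g x * ψ y = g y * ψ x := mul_right_cancel₀ (pow_ne_zero M hd) h3
      have h5 : g ((ψ x / ψ y) • y) = (ψ x / ψ y) * g y := by simp
      rw [h5]
      field_simp
      linear_combination h4
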